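/- For integers n, p, m, C_q(n−p, m) = ∑_{k=0}^{m} (−1)^k q^{(n−m−p)k + binom(k+1,2)} C_q(p,k) C_q(n−k, m−k). -/

import Mathlib

/-- The Gaussian binomial coefficient `C_q(a,k)`, extended to integer arguments,
with value `0` when `k < 0`. -/
noncomputable def gbinom (q : ℝ) (a k : ℤ) : ℝ :=
  if k < 0 then 0
  else ∏ i ∈ Finset.range k.toNat, (q ^ (a - k + i + 1) - 1) / (q ^ ((i : ℤ) + 1) - 1)

namespace Stmt10Aux

noncomputable def G (q : ℝ) (a : ℤ) (k : ℕ) : ℝ :=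
  ∏ i ∈ Finset.range k, (q ^ (a - k + i + 1) - 1) / (q ^ ((i : ℤ) + 1) - 1)

lemma gbinom_natCast (q : ℝ) (a : ℤ) (k : ℕ) : gbinom q a (k : ℤ) = G q a k := by
  simp [gbinom, G]

variable {q : ℝ}

lemma qne (hq : 1 < q) : q ≠ 0 := by positivity

lemma den_ne (hq : 1 < q) (i : ℕ) : q ^ ((i:ℤ)+1) - 1 ≠ 0 := by
  have : (1:ℝ) < q ^ ((i:ℤ)+1) := one_lt_zpow₀ hq (by positivity)
  linarith

lemma lemA (hq : 1 < q) (a : ℤ) (k : ℕ) :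
    (q ^ ((k:ℤ)+1) - 1) * G q a (k+1) = (q ^ a - 1) * G q (a-1) k := by
  unfold G
  rw [Finset.prod_range_succ]
  rw [show a - (↑(k+1):ℤ) + ↑k + 1 = a from by push_cast; ring]
  rw [Finset.prod_congr rfl (fun i _ => by
    rw [show a - (↑(k+1):ℤ) + ↑i + 1 = a - 1 - ↑k + ↑i + 1 from by push_cast; ring])]
  rw [mul_comm, mul_assoc, div_mul_cancel₀ _ (den_ne hq k), mul_comm]

lemma lemB (hq : 1 < q) (a : ℤ) (k : ℕ) :
    (q ^ ((k:ℤ)+1) - 1) * G q a (k+1) = (q ^ (a - k) - 1) * G q a k := by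
  have hsplit : ∀ (b : ℤ) (K : ℕ), G q b K =
      (∏ i ∈ Finset.range K, (q ^ (b - K + i + 1) - 1)) /
      (∏ i ∈ Finset.range K, (q ^ ((i:ℤ) + 1) - 1)) := fun b K => by
    rw [G, Finset.prod_div_distrib]
  rw [hsplit, hsplit]
  rw [Finset.prod_range_succ' (fun i => (q ^ (a - (↑(k+1):ℤ) + i + 1) - 1)) k]
  rw [Finset.prod_range_succ (fun i => (q ^ ((i:ℤ) + 1) - 1)) k]
  rw [show a - (↑(k+1):ℤ) + ↑(0:ℕ) + 1 = a - ↑k from by push_cast; ring]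
  rw [Finset.prod_congr rfl (fun i _ => by
    rw [show a - (↑(k+1):ℤ) + ↑(i+1) + 1 = a - ↑k + ↑i + 1 from by push_cast; ring])]
  have hD : (∏ i ∈ Finset.range k, (q ^ ((i:ℤ) + 1) - 1)) ≠ 0 :=
    Finset.prod_ne_zero_iff.mpr fun i _ => den_ne hq i
  have hK := den_ne hq k
  field_simp

end Stmt10Aux

namespace Stmt10Aux
variable {q : ℝ}

lemma P1 (hq : 1 < q) (a : ℤ) (k : ℕ) :
    G q a (k+1) = q ^ (a - ((k:ℤ)+1)) * G q (a-1) k + G q (a-1) (k+1) := by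
  have hK := den_ne hq k
  apply mul_left_cancel₀ hK
  rw [lemA hq a k, mul_add, lemB hq (a-1) k]
  rw [show a - 1 - (k:ℤ) = a - ((k:ℤ)+1) from by ring]
  have hsplit : q ^ a = q ^ (a - ((k:ℤ)+1)) * q ^ ((k:ℤ)+1) := by
    rw [← zpow_add₀ (qne hq)]; congr 1; ring
  rw [hsplit]; ring

lemma P2 (hq : 1 < q) (a : ℤ) (k : ℕ) :
    G q a (k+1) = G q (a-1) k + q ^ ((k:ℤ)+1) * G q (a-1) (k+1) := by
  have hK := den_ne hq k
  apply mul_left_cancel₀ hK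
  rw [lemA hq a k, mul_add, ← mul_assoc, mul_comm (q ^ ((k:ℤ)+1) - 1) (q ^ ((k:ℤ)+1)),
    mul_assoc, lemB hq (a-1) k]
  rw [show a - 1 - (k:ℤ) = a - ((k:ℤ)+1) from by ring]
  have hsplit : q ^ a = q ^ ((k:ℤ)+1) * q ^ (a - ((k:ℤ)+1)) := by
    rw [← zpow_add₀ (qne hq)]; congr 1; ring
  rw [hsplit]; ring

lemma G0 (hq : 1 < q) (k : ℕ) : G q 0 (k+1) = 0 := by
  have h := lemA hq 0 k
  rw [zpow_zero] at h
  simp at h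
  rcases h with h | h
  · exact absurd h (den_ne hq k)
  · exact h

lemma Gzero (q : ℝ) (a : ℤ) : G q a 0 = 1 := by simp [G]

end Stmt10Aux

namespace Stmt10Aux
variable {q : ℝ}

noncomputable def S (q : ℝ) (m : ℕ) (n p : ℤ) : ℝ :=
  ∑ k ∈ Finset.range (m + 1),
    (-1 : ℝ) ^ k * q ^ ((n - m - p) * k + ((k + 1).choose 2 : ℤ)) *
      G q p k * G q (n - k) (m - k)

lemma S_zero (hq : 1 < q) (m : ℕ) (n : ℤ) : S q m n 0 = G q n m := by
  unfold S
  rw [Finset.sum_range_succ']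
  rw [Finset.sum_eq_zero (fun k _ => by rw [G0 hq k]; ring)]
  norm_num [Gzero]

end Stmt10Aux

namespace Stmt10Aux
variable {q : ℝ}

lemma term_step (hq : 1 < q) (m k : ℕ) (hk : k ≤ m) (n p : ℤ) :
    (-1:ℝ)^(k+1) * q ^ ((n - ((m+1 : ℕ):ℤ) - p) * ((k+1 : ℕ):ℤ) + (((k+1)+1).choose 2 : ℤ)) *
        G q p (k+1) * G q (n - ((k+1 : ℕ):ℤ)) ((m+1) - (k+1))
    = (-1:ℝ)^(k+1) * q ^ ((n - ((m+1 : ℕ):ℤ) - (p-1)) * ((k+1 : ℕ):ℤ) + (((k+1)+1).choose 2 : ℤ)) *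
        G q (p-1) (k+1) * G q (n - ((k+1 : ℕ):ℤ)) ((m+1) - (k+1))
      - q ^ (n - (m:ℤ) - p) *
        ((-1:ℝ)^k * q ^ ((n - 1 - (m:ℤ) - (p-1)) * (k:ℤ) + ((k+1).choose 2 : ℤ)) *
          G q (p-1) k * G q (n - 1 - (k:ℤ)) (m - k)) := by
  have hMk : (m+1) - (k+1) = m - k := by omega
  have hnk : n - ((k+1 : ℕ):ℤ) = n - 1 - (k:ℤ) := by push_cast; ring
  rw [hMk, hnk, P2 hq p k]
  have hchoose : ((((k+1)+1).choose 2 : ℕ) : ℤ) = (((k+1).choose 2 : ℕ) : ℤ) + (k+1) := by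
    rw [Nat.choose_succ_succ (k+1) 1, Nat.choose_one_right]
    push_cast; ring
  have e1 : q ^ ((n - ((m+1 : ℕ):ℤ) - p) * ((k+1 : ℕ):ℤ) + (((k+1)+1).choose 2 : ℤ)) * q ^ ((k:ℤ)+1)
      = q ^ ((n - ((m+1 : ℕ):ℤ) - (p-1)) * ((k+1 : ℕ):ℤ) + (((k+1)+1).choose 2 : ℤ)) := by
    rw [← zpow_add₀ (qne hq)]; congr 1; push_cast; ring
  have e2 : q ^ ((n - ((m+1 : ℕ):ℤ) - p) * ((k+1 : ℕ):ℤ) + (((k+1)+1).choose 2 : ℤ))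
      = q ^ (n - (m:ℤ) - p) * q ^ ((n - 1 - (m:ℤ) - (p-1)) * (k:ℤ) + ((k+1).choose 2 : ℤ)) := by
    rw [← zpow_add₀ (qne hq)]; congr 1; rw [hchoose]; push_cast; ring
  linear_combination ((-1:ℝ)^(k+1) * G q (p-1) (k+1) * G q (n-1-(k:ℤ)) (m-k)) * e1 +
    ((-1:ℝ)^(k+1) * G q (p-1) k * G q (n-1-(k:ℤ)) (m-k)) * e2

lemma sum_step (hq : 1 < q) (m : ℕ) (n p : ℤ) :
    S q (m+1) n p = S q (m+1) n (p-1) - q ^ (n - (m:ℤ) - p) * S q m (n-1) (p-1) := by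
  have h1 := Finset.sum_range_succ'
    (fun k => (-1:ℝ)^k * q ^ ((n - ((m+1 : ℕ):ℤ) - p) * (k:ℤ) + ((k+1).choose 2 : ℤ)) *
      G q p k * G q (n - (k:ℤ)) (m+1-k)) (m+1)
  have h2 := Finset.sum_range_succ'
    (fun k => (-1:ℝ)^k * q ^ ((n - ((m+1 : ℕ):ℤ) - (p-1)) * (k:ℤ) + ((k+1).choose 2 : ℤ)) *
      G q (p-1) k * G q (n - (k:ℤ)) (m+1-k)) (m+1)
  unfold S
  rw [h1, h2]
  rw [Finset.sum_congr rfl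
    (fun k hk => term_step hq m k (Nat.lt_succ_iff.mp (Finset.mem_range.mp hk)) n p)]
  rw [Finset.sum_sub_distrib, Finset.mul_sum]
  norm_num [Gzero]
  ring

end Stmt10Aux

namespace Stmt10Aux
variable {q : ℝ}

lemma main (hq : 1 < q) : ∀ (m : ℕ) (n p : ℤ), G q (n - p) m = S q m n p := by
  intro m
  induction m with
  | zero =>
    intro n p
    unfold S
    norm_num [Gzero]
  | succ m ih =>
    intro n
    have key : ∀ p : ℤ, (G q (n - p) (m+1) = S q (m+1) n p) ↔
        (G q (n - (p-1)) (m+1) = S q (m+1) n (p-1)) := by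
      intro p
      have h1 := sum_step hq m n p
      have h2 := ih (n-1) (p-1)
      rw [show n - 1 - (p-1) = n - p from by ring] at h2
      rw [← h2] at h1
      have h4 := P1 hq (n - p + 1) m
      rw [show n - p + 1 - 1 = n - p from by ring,
        show n - p + 1 - ((m:ℤ)+1) = n - (m:ℤ) - p from by ring] at h4
      rw [show n - (p-1) = n - p + 1 from by ring]
      constructor <;> intro h <;> linarith
    intro p
    induction p using Int.induction_on with
    | zero => rw [S_zero hq, sub_zero]
    | succ i hi =>
      apply (key ((i:ℤ)+1)).mpr
      rw [show ((i:ℤ)+1) - 1 = (i:ℤ) from by ring]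
      exact hi
    | pred i hi =>
      have := (key (-(i:ℤ))).mp hi
      rw [show -(i:ℤ) - 1 = -(i:ℤ) - 1 from rfl] at this
      exact this

end Stmt10Aux


theorem stmt10 (q : ℝ) (hq : 1 < q) (n p : ℤ) (m : ℕ) :
    gbinom q (n - p) m =
      ∑ k ∈ Finset.range (m + 1),
        (-1 : ℝ) ^ k * q ^ ((n - m - p) * k + ((k + 1).choose 2 : ℤ)) *
          gbinom q p k * gbinom q (n - k) ((m : ℤ) - k) := by
  rw [Stmt10Aux.gbinom_natCast, Stmt10Aux.main hq m n p]
  unfold Stmt10Aux.S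
  refine Finset.sum_congr rfl fun k hk => ?_
  have hk' : k ≤ m := Nat.lt_succ_iff.mp (Finset.mem_range.mp hk)
  rw [Stmt10Aux.gbinom_natCast,
    show (m:ℤ) - (k:ℤ) = ((m - k : ℕ) : ℤ) from by omega,
    Stmt10Aux.gbinom_natCast]
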